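/- For all natural numbers n and k with 1 ≤ k ≤ n, letting m = ⌊n/k⌋ (integer floor division), it holds that ∏_{i=0}^{k−1} ((n − m − i)/(n − i)) + Σ_{t=m+1}^{n} (1/t)·∏_{i=0}^{k−1} ((n − t − i)/(n − i)) < 1. -/

import Mathlib

open Finset

/-- cross step identity for descending factorials -/
lemma desc_step (a k : ℕ) :
    (a + 1 - k) * (a + 1).descFactorial k = (a + 1) * a.descFactorial k := by
  cases k with
  | zero => simp
  | succ j =>
    rw [Nat.succ_descFactorial_succ, Nat.descFactorial_succ, Nat.succ_sub_succ]
    ring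

/-- telescoping comparison -/
lemma desc_telescope (n k : ℕ) : ∀ m, k + m ≤ n →
    n ^ m * (n - m).descFactorial k ≤ (n - k) ^ m * n.descFactorial k := by
  intro m
  induction m with
  | zero => simp
  | succ m ih =>
    intro h
    have ih' := ih (by omega)
    have hnm : 0 < n - m := by omega
    apply Nat.le_of_mul_le_mul_left _ hnm
    have hstep : (n - m - k) * (n - m).descFactorial k
        = (n - m) * (n - m - 1).descFactorial k := by
      have h0 := desc_step (n - m - 1) k
      have h1 : n - m - 1 + 1 = n - m := by omega
      rw [h1] at h0
      exact h0
    have h2 : n - (m + 1) = n - m - 1 := by omega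
    calc (n - m) * (n ^ (m + 1) * (n - (m + 1)).descFactorial k)
        = n ^ m * n * ((n - m) * (n - m - 1).descFactorial k) := by rw [h2]; ring
      _ = n ^ m * n * ((n - m - k) * (n - m).descFactorial k) := by rw [hstep]
      _ = n * (n - m - k) * (n ^ m * (n - m).descFactorial k) := by ring
      _ ≤ n * (n - m - k) * ((n - k) ^ m * n.descFactorial k) :=
          Nat.mul_le_mul_left _ ih'
      _ ≤ (n - k) * (n - m) * ((n - k) ^ m * n.descFactorial k) := by
          apply Nat.mul_le_mul_right
          zify [show k ≤ n by omega, show m ≤ n by omega, show k ≤ n - m by omega]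
          nlinarith [Int.natCast_nonneg m, Int.natCast_nonneg k]
      _ = (n - m) * ((n - k) ^ (m + 1) * n.descFactorial k) := by ring

/-- hockey stick for descending factorials -/
lemma sum_desc (k : ℕ) : ∀ N : ℕ,
    (k + 1) * ∑ j ∈ range N, j.descFactorial k = N.descFactorial (k + 1) := by
  intro N
  induction N with
  | zero => simp
  | succ N ih =>
    rw [sum_range_succ, mul_add, ih, Nat.succ_descFactorial_succ,
      Nat.descFactorial_succ]
    rcases le_or_gt k N with h | h
    · have h1 : N - k + (k + 1) = N + 1 := by omega
      nlinarith [h1]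
    · rw [Nat.descFactorial_eq_zero_iff_lt.mpr h]
      simp

lemma descFactorial_pos' {n k : ℕ} (h : k ≤ n) : 0 < n.descFactorial k := by
  rcases Nat.eq_zero_or_pos (n.descFactorial k) with h0 | h0
  · exact absurd (Nat.descFactorial_eq_zero_iff_lt.mp h0) (by omega)
  · exact h0

lemma castdesc (b k : ℕ) :
    ∏ i ∈ range k, ((b : ℝ) - i) = (b.descFactorial k : ℝ) := by
  rcases lt_or_ge b k with h | h
  · rw [Nat.descFactorial_eq_zero_iff_lt.mpr h, Nat.cast_zero]
    exact prod_eq_zero (mem_range.mpr h) (by simp)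
  · rw [Nat.descFactorial_eq_prod_range, Nat.cast_prod]
    apply prod_congr rfl
    intro i hi
    rw [Nat.cast_sub (le_trans (le_of_lt (mem_range.mp hi)) h)]

lemma pow_two_le (a k m : ℕ) (h : a < k * m) (hm : 1 ≤ m) :
    2 * a ^ m ≤ (a + k) ^ m := by
  rcases Nat.eq_zero_or_pos a with rfl | ha
  · have hz : (0 : ℕ) ^ m = 0 := zero_pow (by omega : m ≠ 0)
    simp [hz]
  · have ha' : (0 : ℝ) < a := by exact_mod_cast ha
    have h1 : (1 : ℝ) + m * ((k : ℝ) / a) ≤ (1 + (k : ℝ) / a) ^ m :=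
      one_add_mul_le_pow (le_trans (by norm_num : (-2:ℝ) ≤ 0) (by positivity)) m
    have h2 : (1 : ℝ) ≤ (m : ℝ) * ((k : ℝ) / a) := by
      rw [mul_div_assoc', le_div_iff₀ ha', one_mul]
      have hc : (a : ℝ) < (k : ℝ) * m := by exact_mod_cast h
      nlinarith
    have h3 : (2 : ℝ) * (a : ℝ) ^ m ≤ ((a : ℝ) + k) ^ m := by
      have h4 : ((a : ℝ) + k) ^ m = (1 + (k : ℝ) / a) ^ m * (a : ℝ) ^ m := by
        rw [← mul_pow]
        congr 1
        field_simp
      rw [h4]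
      have hpow : (0 : ℝ) < (a : ℝ) ^ m := by positivity
      nlinarith
    exact_mod_cast h3

lemma reindex_sum (n k m : ℕ) (hmn : m ≤ n) :
    ∑ t ∈ Icc (m + 1) n, (n - t).descFactorial k
      = ∑ j ∈ range (n - m), j.descFactorial k := by
  rw [show Icc (m + 1) n = Ico (m + 1) (n + 1) from by rw [Finset.Ico_add_one_right_eq_Icc]]
  rw [Finset.sum_Ico_eq_sum_range]
  rw [show n + 1 - (m + 1) = n - m from by omega]
  rw [← Finset.sum_range_reflect]
  apply sum_congr rfl
  intro i hi
  congr 1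
  have := mem_range.mp hi
  omega

lemma main_nat (n k : ℕ) (hk : 1 ≤ k) (hkn : k ≤ n) :
    (n / k + 1) * (n - n / k).descFactorial k
      + ∑ j ∈ range (n - n / k), j.descFactorial k
    < (n / k + 1) * n.descFactorial k := by
  set m := n / k with hm
  have hm1 : 1 ≤ m := (Nat.one_le_div_iff (by omega)).mpr hkn
  have hmn : m ≤ n := Nat.div_le_self n k
  obtain ⟨r, hr, hn⟩ : ∃ r, r < k ∧ n = k * m + r :=
    ⟨n % k, Nat.mod_lt _ (by omega), by rw [hm]; exact (Nat.div_add_mod n k).symm⟩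
  obtain ⟨p, hp⟩ : ∃ p, k * m = p := ⟨_, rfl⟩
  rw [hp] at hn
  have hD : 0 < n.descFactorial k := descFactorial_pos' hkn
  apply Nat.lt_of_mul_lt_mul_left (a := k + 1)
  rw [Nat.mul_add, sum_desc, Nat.descFactorial_succ]
  rcases lt_or_ge (n - m) k with hc | hc
  · rw [Nat.descFactorial_eq_zero_iff_lt.mpr hc]
    simp only [Nat.mul_zero, Nat.zero_mul, Nat.add_zero, Nat.zero_add]
    exact Nat.mul_pos (by omega) (Nat.mul_pos (by omega) hD)
  · have hd : 0 < (n - m).descFactorial k := descFactorial_pos' hc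
    have h2d : 2 * (n - m).descFactorial k ≤ n.descFactorial k := by
      have tel := desc_telescope n k m (by omega)
      have hpow : 2 * (n - k) ^ m ≤ n ^ m := by
        have h5 : n - k < k * m := by rw [hp]; omega
        have h6 := pow_two_le (n - k) k m h5 hm1
        rwa [show n - k + k = n by omega] at h6
      have h6 : (n - k) ^ m * (2 * (n - m).descFactorial k)
          ≤ (n - k) ^ m * n.descFactorial k := by
        calc (n - k) ^ m * (2 * (n - m).descFactorial k)
            = (2 * (n - k) ^ m) * (n - m).descFactorial k := by ring
          _ ≤ n ^ m * (n - m).descFactorial k := Nat.mul_le_mul_right _ hpow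
          _ ≤ (n - k) ^ m * n.descFactorial k := tel
      refine Nat.le_of_mul_le_mul_left h6 ?_
      have hnk : 0 < n - k := by omega
      positivity
    have hlt : n - m - k < (k + 1) * (m + 1) := by
      have hexp : (k + 1) * (m + 1) = k * m + k + m + 1 := by ring
      rw [hexp, hp]
      omega
    calc (k + 1) * ((m + 1) * (n - m).descFactorial k)
          + (n - m - k) * (n - m).descFactorial k
        < (k + 1) * ((m + 1) * (n - m).descFactorial k)
          + ((k + 1) * (m + 1)) * (n - m).descFactorial k := by
          exact Nat.add_lt_add_left ((Nat.mul_lt_mul_right hd).mpr hlt) _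
      _ = (k + 1) * ((m + 1) * (2 * (n - m).descFactorial k)) := by ring
      _ ≤ (k + 1) * ((m + 1) * n.descFactorial k) := by
          exact Nat.mul_le_mul_left _ (Nat.mul_le_mul_left _ h2d)

theorem stmt_5 (n k : ℕ) (hk : 1 ≤ k) (hkn : k ≤ n) :
    (∏ i ∈ Finset.range k, (((n : ℝ) - (n / k : ℕ) - i) / ((n : ℝ) - i)))
        + ∑ t ∈ Finset.Icc (n / k + 1) n,
            (1 / (t : ℝ)) * ∏ i ∈ Finset.range k, (((n : ℝ) - t - i) / ((n : ℝ) - i))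
      < 1 := by
  set m := n / k with hm
  have hm1 : 1 ≤ m := (Nat.one_le_div_iff (by omega)).mpr hkn
  have hmn : m ≤ n := Nat.div_le_self n k
  have hD0 : 0 < n.descFactorial k := descFactorial_pos' hkn
  have hD : (0 : ℝ) < (n.descFactorial k : ℝ) := by exact_mod_cast hD0
  have key : ∀ t : ℕ, t ≤ n →
      ∏ i ∈ range k, (((n : ℝ) - t - i) / ((n : ℝ) - i))
        = ((n - t).descFactorial k : ℝ) / (n.descFactorial k : ℝ) := by
    intro t ht
    rw [prod_div_distrib, castdesc n k]
    congr 1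
    rw [← castdesc (n - t) k]
    apply prod_congr rfl
    intro i _
    rw [Nat.cast_sub ht]
  rw [key m hmn]
  rw [Finset.sum_congr rfl (fun t htm => by
    rw [key t (mem_Icc.mp htm).2] :
    ∀ t ∈ Icc (m + 1) n, (1 / (t : ℝ)) * ∏ i ∈ range k,
      (((n : ℝ) - t - i) / ((n : ℝ) - i))
      = (1 / (t : ℝ)) * (((n - t).descFactorial k : ℝ) / (n.descFactorial k : ℝ)))]
  have hbound : ∑ t ∈ Icc (m + 1) n,
        (1 / (t : ℝ)) * (((n - t).descFactorial k : ℝ) / (n.descFactorial k : ℝ))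
      ≤ ∑ t ∈ Icc (m + 1) n,
        (1 / ((m : ℝ) + 1)) * (((n - t).descFactorial k : ℝ) / (n.descFactorial k : ℝ)) := by
    apply sum_le_sum
    intro t htm
    have h1 : (m : ℝ) + 1 ≤ t := by exact_mod_cast (mem_Icc.mp htm).1
    apply mul_le_mul_of_nonneg_right
    · exact one_div_le_one_div_of_le (by positivity) h1
    · positivity
  have hre : ∑ t ∈ Icc (m + 1) n,
        (1 / ((m : ℝ) + 1)) * (((n - t).descFactorial k : ℝ) / (n.descFactorial k : ℝ))
      = (((m + 1) * (n - m).descFactorial k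
            + ∑ j ∈ range (n - m), j.descFactorial k : ℕ) : ℝ)
          / (((m : ℝ) + 1) * (n.descFactorial k : ℝ))
        - ((n - m).descFactorial k : ℝ) / (n.descFactorial k : ℝ) := by
    rw [← mul_sum, ← sum_div]
    rw [show ∑ t ∈ Icc (m + 1) n, ((n - t).descFactorial k : ℝ)
        = ((∑ j ∈ range (n - m), j.descFactorial k : ℕ) : ℝ) from by
      rw [← Nat.cast_sum]; exact Nat.cast_inj.mpr (reindex_sum n k m hmn)]
    push_cast
    field_simp
    try ring
  have hnat := main_nat n k hk hkn
  rw [← hm] at hnat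
  calc ((n - m).descFactorial k : ℝ) / (n.descFactorial k : ℝ)
        + ∑ t ∈ Icc (m + 1) n,
          (1 / (t : ℝ)) * (((n - t).descFactorial k : ℝ) / (n.descFactorial k : ℝ))
      ≤ ((n - m).descFactorial k : ℝ) / (n.descFactorial k : ℝ)
        + ∑ t ∈ Icc (m + 1) n,
          (1 / ((m : ℝ) + 1)) * (((n - t).descFactorial k : ℝ) / (n.descFactorial k : ℝ)) :=
        add_le_add_right hbound _
    _ = (((m + 1) * (n - m).descFactorial k
            + ∑ j ∈ range (n - m), j.descFactorial k : ℕ) : ℝ)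
          / (((m : ℝ) + 1) * (n.descFactorial k : ℝ)) := by rw [hre]; ring
    _ < 1 := by
        rw [div_lt_one (by positivity)]
        have : (((m + 1) * (n - m).descFactorial k
            + ∑ j ∈ range (n - m), j.descFactorial k : ℕ) : ℝ)
            < (((m + 1) * n.descFactorial k : ℕ) : ℝ) := by exact_mod_cast hnat
        calc (((m + 1) * (n - m).descFactorial k
            + ∑ j ∈ range (n - m), j.descFactorial k : ℕ) : ℝ)
            < (((m + 1) * n.descFactorial k : ℕ) : ℝ) := this
          _ = ((m : ℝ) + 1) * (n.descFactorial k : ℝ) := by push_cast; ring
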